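/- Let Δ = {(x,y) ∈ ℝ² : x + y < 1, 0 < x, 0 < y} and g(x,y) = ((1-x-y)/(x+y))·((1-y)/y). Then g is strictly convex on the open convex set C_g = {(x,y) ∈ Δ : x + 2y - xy - y² < 3/4}. -/

import Mathlib

lemma comb_pos {s t a b : ℝ} (hs : 0 ≤ s) (ht : 0 ≤ t) (hst : s + t = 1)
    (ha : 0 < a) (hb : 0 < b) : 0 < s * a + t * b := by
  rcases eq_or_lt_of_le hs with h | h
  · rw [← h]; have : t = 1 := by linarith
    rw [this]; simpa using hb
  · nlinarith [mul_nonneg ht hb.le, mul_pos h ha]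

lemma hyp_conv {s t a1 b1 a2 b2 : ℝ} (hs : 0 ≤ s) (ht : 0 ≤ t) (hst : s + t = 1)
    (ha1 : 0 < a1) (hb1 : 0 < b1) (ha2 : 0 < a2) (hb2 : 0 < b2)
    (h1 : 1/4 < a1 * b1) (h2 : 1/4 < a2 * b2) :
    1/4 < (s * a1 + t * a2) * (s * b1 + t * b2) := by
  have hSpos : 0 < a1*b2 + a2*b1 := by positivity
  have hprod : 1/16 < (a1*b1)*(a2*b2) := by nlinarith
  have hS2 : 1/4 < (a1*b2 + a2*b1)^2 := by nlinarith [sq_nonneg (a1*b2 - a2*b1)]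
  have hS : 1/2 < a1*b2 + a2*b1 := by nlinarith
  rcases eq_or_lt_of_le hs with h | h
  · rw [← h]; have : t = 1 := by linarith
    rw [this]; simpa using h2
  · have h1' : (s+t)^2 = 1 := by rw [hst]; norm_num
    nlinarith [mul_pos (mul_pos h h) (by linarith : (0:ℝ) < a1*b1 - 1/4),
      mul_nonneg (mul_nonneg ht ht) (by linarith : (0:ℝ) ≤ a2*b2 - 1/4),
      mul_nonneg (mul_nonneg h.le ht) (by linarith : (0:ℝ) ≤ a1*b2 + a2*b1 - 1/2)]

lemma Cg_convex : Convex ℝ {p : ℝ × ℝ |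
        (p.1 + p.2 < 1 ∧ 0 < p.1 ∧ 0 < p.2) ∧
        p.1 + 2 * p.2 - p.1 * p.2 - p.2 ^ 2 < 3 / 4} := by
  intro p hp q hq s t hs ht hst
  obtain ⟨⟨hp1, hp2, hp3⟩, hp4⟩ := hp
  obtain ⟨⟨hq1, hq2, hq3⟩, hq4⟩ := hq
  simp only [Set.mem_setOf_eq, Prod.fst_add, Prod.snd_add, Prod.smul_fst, Prod.smul_snd,
    smul_eq_mul]
  have hp4' : 1/4 < (1 - (p.1+p.2))*(1-p.2) := by nlinarith
  have hq4' : 1/4 < (1 - (q.1+q.2))*(1-q.2) := by nlinarith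
  have hmain := hyp_conv hs ht hst (by linarith : (0:ℝ) < 1 - (p.1+p.2))
    (by linarith : (0:ℝ) < 1 - p.2) (by linarith : (0:ℝ) < 1 - (q.1+q.2))
    (by linarith : (0:ℝ) < 1 - q.2) hp4' hq4'
  have hcomb1 := comb_pos hs ht hst (by linarith : (0:ℝ) < 1 - (p.1+p.2))
    (by linarith : (0:ℝ) < 1 - (q.1+q.2))
  refine ⟨⟨by linarith, comb_pos hs ht hst hp2 hq2, comb_pos hs ht hst hp3 hq3⟩, ?_⟩
  have key : s * p.1 + t * q.1 + 2 * (s * p.2 + t * q.2)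
      - (s * p.1 + t * q.1) * (s * p.2 + t * q.2) - (s * p.2 + t * q.2) ^ 2
      = 1 - (s*(1 - (p.1+p.2)) + t*(1 - (q.1+q.2)))*(s*(1-p.2)+t*(1-q.2)) := by
    have : t = 1 - s := by linarith
    rw [this]; ring
  rw [key]; linarith

lemma affine_hasDeriv (u a r : ℝ) : HasDerivAt (fun r : ℝ => u + r * a) a r := by
  simpa using ((hasDerivAt_id r).mul_const a).const_add u

lemma A_hasDeriv (u a r : ℝ) (hU : u + r * a ≠ 0) :
    HasDerivAt (fun r : ℝ => (1 - (u + r * a)) / (u + r * a)) (-a / (u + r * a) ^ 2) r := by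
  have h1 : HasDerivAt (fun r : ℝ => 1 - (u + r * a)) (-a) r := by
    simpa using (affine_hasDeriv u a r).const_sub 1
  have := h1.fun_div (affine_hasDeriv u a r) hU
  refine this.congr_deriv ?_
  field_simp
  ring

lemma phi_hasDeriv (u y a b r : ℝ) (hU : u + r * a ≠ 0) (hY : y + r * b ≠ 0) :
    HasDerivAt (fun r : ℝ => ((1 - (u + r * a)) / (u + r * a)) * ((1 - (y + r * b)) / (y + r * b)))
      ((-a / (u + r * a) ^ 2) * ((1 - (y + r * b)) / (y + r * b))
        + ((1 - (u + r * a)) / (u + r * a)) * (-b / (y + r * b) ^ 2)) r :=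
  (A_hasDeriv u a r hU).mul (A_hasDeriv y b r hY)

lemma inv_sq_hasDeriv (u a r : ℝ) (hU : u + r * a ≠ 0) :
    HasDerivAt (fun r : ℝ => -a / (u + r * a) ^ 2) (2 * a ^ 2 / (u + r * a) ^ 3) r := by
  have h2 : HasDerivAt (fun r : ℝ => (u + r * a) ^ 2) (2 * (u + r * a) * a) r := by
    simpa using (affine_hasDeriv u a r).fun_pow 2
  have := (hasDerivAt_const r (-a)).fun_div h2 (pow_ne_zero 2 hU)
  refine this.congr_deriv ?_
  field_simp
  ring

lemma psi_hasDeriv (u y a b r : ℝ) (hU : u + r * a ≠ 0) (hY : y + r * b ≠ 0) :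
    HasDerivAt (fun r : ℝ => (-a / (u + r * a) ^ 2) * ((1 - (y + r * b)) / (y + r * b))
        + ((1 - (u + r * a)) / (u + r * a)) * (-b / (y + r * b) ^ 2))
      (2 * a ^ 2 * ((1 - (y + r * b)) / (y + r * b)) / (u + r * a) ^ 3
        + 2 * a * b / ((u + r * a) ^ 2 * (y + r * b) ^ 2)
        + 2 * b ^ 2 * ((1 - (u + r * a)) / (u + r * a)) / (y + r * b) ^ 3) r := by
  have h1 := (inv_sq_hasDeriv u a r hU).fun_mul (A_hasDeriv y b r hY)
  have h2 := (A_hasDeriv u a r hU).fun_mul (inv_sq_hasDeriv y b r hY)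
  have := h1.fun_add h2
  refine this.congr_deriv ?_
  field_simp
  ring

lemma chi_pos {u y a b : ℝ} (hu : 0 < u) (hu1 : u < 1) (hy : 0 < y) (hy1 : y < 1)
    (hR : 1 / 4 < (1 - u) * (1 - y)) (hab : a ≠ 0 ∨ b ≠ 0) :
    0 < 2 * a ^ 2 * ((1 - y) / y) / u ^ 3 + 2 * a * b / (u ^ 2 * y ^ 2)
      + 2 * b ^ 2 * ((1 - u) / u) / y ^ 3 := by
  have hQ : 0 < a ^ 2 * (1 - y) * y ^ 2 + a * b * (u * y) + b ^ 2 * (1 - u) * u ^ 2 := by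
    rcases eq_or_ne b 0 with hb | hb
    · rcases hab with ha | hb'
      · rw [hb]
        have ha2 : 0 < a ^ 2 := lt_of_le_of_ne (sq_nonneg a) (Ne.symm (pow_ne_zero 2 ha))
        nlinarith [mul_pos (mul_pos ha2 (by linarith : (0:ℝ) < 1 - y)) (by positivity : (0:ℝ) < y ^ 2)]
      · exact absurd hb hb'
    · have hb2 : 0 < b ^ 2 := lt_of_le_of_ne (sq_nonneg b) (Ne.symm (pow_ne_zero 2 hb))
      nlinarith [sq_nonneg (2 * (1 - y) * y ^ 2 * a + u * y * b),
        mul_pos (mul_pos hb2 (by positivity : (0:ℝ) < u ^ 2 * y ^ 2))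
          (by linarith : (0:ℝ) < 4 * ((1 - u) * (1 - y)) - 1),
        mul_pos (by linarith : (0:ℝ) < 1 - y) (by positivity : (0:ℝ) < y ^ 2)]
  have key : 2 * a ^ 2 * ((1 - y) / y) / u ^ 3 + 2 * a * b / (u ^ 2 * y ^ 2)
      + 2 * b ^ 2 * ((1 - u) / u) / y ^ 3
      = 2 * (a ^ 2 * (1 - y) * y ^ 2 + a * b * (u * y) + b ^ 2 * (1 - u) * u ^ 2) / (u ^ 3 * y ^ 3) := by
    field_simp
  rw [key]
  positivity

/-- The function `g(x,y) = ((1-x-y)/(x+y)) · ((1-y)/y)` is strictly convex on the open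
convex set `C_g = {(x,y) ∈ Δ : x + 2y - xy - y² < 3/4}`, where
`Δ = {(x,y) : x + y < 1, 0 < x, 0 < y}`. -/
theorem g_strictConvexOn_Cg :
    StrictConvexOn ℝ
      {p : ℝ × ℝ |
        (p.1 + p.2 < 1 ∧ 0 < p.1 ∧ 0 < p.2) ∧
        p.1 + 2 * p.2 - p.1 * p.2 - p.2 ^ 2 < 3 / 4}
      (fun p : ℝ × ℝ => ((1 - p.1 - p.2) / (p.1 + p.2)) * ((1 - p.2) / p.2)) := by
  refine ⟨Cg_convex, ?_⟩
  intro p hp q hq hpq s t hs ht hst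
  obtain rfl : s = 1 - t := by linarith
  set u : ℝ := p.1 + p.2 with hu
  set y : ℝ := p.2 with hy
  set a : ℝ := (q.1 + q.2) - (p.1 + p.2) with ha
  set b : ℝ := q.2 - p.2 with hb
  set φ : ℝ → ℝ := fun r => ((1 - (u + r * a)) / (u + r * a)) * ((1 - (y + r * b)) / (y + r * b))
    with hφ
  -- properties along the segment
  have hseg : ∀ r ∈ Set.Icc (0:ℝ) 1,
      0 < u + r * a ∧ u + r * a < 1 ∧ 0 < y + r * b ∧ y + r * b < 1 ∧
        1/4 < (1 - (u + r * a)) * (1 - (y + r * b)) := by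
    intro r hr
    have hm := Cg_convex hp hq (by linarith [hr.2] : (0:ℝ) ≤ 1 - r) hr.1 (by ring)
    simp only [Set.mem_setOf_eq, Prod.fst_add, Prod.snd_add, Prod.smul_fst, Prod.smul_snd,
      smul_eq_mul] at hm
    obtain ⟨⟨hm1, hm2, hm3⟩, hm4⟩ := hm
    have e1 : u + r * a = ((1-r) * p.1 + r * q.1) + ((1-r) * p.2 + r * q.2) := by
      rw [hu, ha]; ring
    have e2 : y + r * b = (1-r) * p.2 + r * q.2 := by rw [hy, hb]; ring
    refine ⟨by rw [e1]; linarith, by rw [e1]; linarith, by rw [e2]; linarith,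
      by rw [e2]; linarith, ?_⟩
    rw [e1, e2]; nlinarith [hm4]
  have hab : a ≠ 0 ∨ b ≠ 0 := by
    by_contra h
    push_neg at h
    obtain ⟨ha0, hb0⟩ := h
    rw [ha, sub_eq_zero] at ha0
    rw [hb, sub_eq_zero] at hb0
    exact hpq (Prod.ext_iff.mpr ⟨by linarith, hb0.symm⟩)
  -- continuity
  have hcont : ContinuousOn φ (Set.Icc 0 1) := by
    apply ContinuousOn.mul
    · exact ContinuousOn.div (by fun_prop) (by fun_prop)
        (fun r hr => ne_of_gt (hseg r hr).1)
    · exact ContinuousOn.div (by fun_prop) (by fun_prop)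
        (fun r hr => ne_of_gt (hseg r hr).2.2.1)
  -- open neighborhood where derivative formula holds
  set V : Set ℝ := {r | 0 < u + r * a ∧ 0 < y + r * b} with hV
  have hVopen : IsOpen V := by
    have : V = ((fun r : ℝ => u + r * a) ⁻¹' Set.Ioi 0) ∩ ((fun r : ℝ => y + r * b) ⁻¹' Set.Ioi 0) := by
      ext r; simp [hV, Set.mem_setOf_eq]
    rw [this]
    exact ((isOpen_Ioi.preimage (by fun_prop)).inter (isOpen_Ioi.preimage (by fun_prop)))
  set ψ : ℝ → ℝ := fun r => (-a / (u + r * a) ^ 2) * ((1 - (y + r * b)) / (y + r * b))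
      + ((1 - (u + r * a)) / (u + r * a)) * (-b / (y + r * b) ^ 2) with hψ
  have hderiv_eq : Set.EqOn (deriv φ) ψ V := by
    intro r hr
    exact (phi_hasDeriv u y a b r (ne_of_gt hr.1) (ne_of_gt hr.2)).deriv
  -- strict convexity of φ on Icc 0 1
  have hφconv : StrictConvexOn ℝ (Set.Icc (0:ℝ) 1) φ := by
    apply strictConvexOn_of_deriv2_pos (convex_Icc 0 1) hcont
    intro r hr
    rw [interior_Icc] at hr
    obtain ⟨hU0, hU1, hY0, hY1, hR⟩ := hseg r (Set.Ioo_subset_Icc_self hr)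
    have hrV : r ∈ V := ⟨hU0, hY0⟩
    have hev : deriv φ =ᶠ[nhds r] ψ :=
      Filter.eventuallyEq_of_mem (hVopen.mem_nhds hrV) hderiv_eq
    have h2 : deriv^[2] φ r = deriv (deriv φ) r := rfl
    rw [h2, hev.deriv_eq, (psi_hasDeriv u y a b r (ne_of_gt hU0) (ne_of_gt hY0)).deriv]
    exact chi_pos hU0 hU1 hY0 hY1 hR hab
  -- apply to points 0 and 1 with weights s=1-t, t
  have h01 : (0:ℝ) ∈ Set.Icc (0:ℝ) 1 := by norm_num
  have h11 : (1:ℝ) ∈ Set.Icc (0:ℝ) 1 := by norm_num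
  have := hφconv.2 h01 h11 (by norm_num) hs ht hst
  simp only [smul_eq_mul, mul_zero, mul_one, zero_add] at this
  have e0 : φ 0 = (1 - p.1 - p.2) / (p.1 + p.2) * ((1 - p.2) / p.2) := by
    rw [hφ]; simp only [zero_mul, add_zero]
    rw [hu, hy]; ring_nf
  have e1 : φ 1 = (1 - q.1 - q.2) / (q.1 + q.2) * ((1 - q.2) / q.2) := by
    rw [hφ]; simp only [one_mul]
    rw [hu, hy, ha, hb]; ring_nf
  have et : φ t = (1 - ((1-t) • p + t • q).1 - ((1-t) • p + t • q).2)
      / (((1-t) • p + t • q).1 + ((1-t) • p + t • q).2)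
      * ((1 - ((1-t) • p + t • q).2) / (((1-t) • p + t • q).2)) := by
    rw [hφ]
    simp only [Prod.fst_add, Prod.snd_add, Prod.smul_fst, Prod.smul_snd, smul_eq_mul]
    rw [hu, hy, ha, hb]; ring_nf
  rw [e0, e1, et] at this
  simpa [smul_eq_mul] using this
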